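/- Let p be a prime and let G be a finite abelian p-group of type (α_1, ..., α_l) (i.e., G ≅ Z_{p^{α_1}} × ... × Z_{p^{α_l}} with α_1 ≤ ... ≤ α_l), and let M ≥ 1 be such that G contains a subgroup isomorphic to Z_{p^{α_l}}^M. Then the number of subgroups of G isomorphic to Z_{p^{α_l}}^M is at least p^{-M^2 α_l} · |G|^M. -/

import Mathlib

private def piRangeEquiv {ι : Type*} {β : ι → Type*} (f : ∀ i, β i → β i) :
    Set.range (fun (v : ∀ i, β i) (i : ι) => f i (v i)) ≃ ∀ i, Set.range (f i) where
  toFun x := fun i => ⟨x.1 i, by obtain ⟨v, hv⟩ := x.2; exact ⟨v i, congrFun hv i⟩⟩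
  invFun u := ⟨fun i => (u i).1, ⟨fun i => (u i).2.choose, funext fun i => (u i).2.choose_spec⟩⟩
  left_inv x := Subtype.ext rfl
  right_inv u := funext fun i => Subtype.ext rfl

private lemma card_range_nsmul_zmod (m n : ℕ) (hm : m ≠ 0) :
    Nat.card (Set.range fun y : ZMod m => n • y) = m / m.gcd n := by
  have hset : (Set.range fun y : ZMod m => n • y)
      = ((AddSubgroup.zmultiples ((n : ZMod m))) : Set (ZMod m)) := by
    ext z
    simp only [Set.mem_range, SetLike.mem_coe, AddSubgroup.mem_zmultiples_iff]
    constructor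
    · rintro ⟨y, rfl⟩
      obtain ⟨w, rfl⟩ := ZMod.intCast_surjective y
      exact ⟨w, by simp [nsmul_eq_mul, zsmul_eq_mul, mul_comm]⟩
    · rintro ⟨w, rfl⟩
      exact ⟨(w : ZMod m), by simp [nsmul_eq_mul, zsmul_eq_mul, mul_comm]⟩
  rw [hset, SetLike.coe_sort_coe, Nat.card_zmultiples, ZMod.addOrderOf_coe _ hm]

private lemma gcd_pow_pow (p s t : ℕ) : Nat.gcd (p ^ s) (p ^ t) = p ^ min s t := by
  rcases le_total s t with h | h
  · rw [Nat.gcd_eq_left (pow_dvd_pow p h), min_eq_left h]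
  · rw [Nat.gcd_eq_right (pow_dvd_pow p h), min_eq_right h]

private lemma card_range_nsmul_zmod_pow (p : ℕ) (hp : p.Prime) (a c : ℕ) (ha : 1 ≤ a)
    (hc : c ≤ a) :
    Nat.card (Set.range fun y : ZMod (p ^ c) => p ^ (a - 1) • y) = if c = a then p else 1 := by
  rw [card_range_nsmul_zmod _ _ (pow_ne_zero _ hp.pos.ne'), gcd_pow_pow]
  split_ifs with h
  · subst h
    rw [min_eq_right (by omega), Nat.pow_div (by omega) hp.pos,
      show c - (c - 1) = 1 by omega, pow_one]
  · rw [min_eq_left (by omega), Nat.div_self (pow_pos hp.pos _)]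

private lemma exists_injection (p a l M b : ℕ) (hb : b + M = l + 1) (hbl : b ≤ l + 1)
    (α : Fin (l + 1) → ℕ)
    (htop : ∀ i : Fin (l + 1), b ≤ i.val → α i = a) (hle : ∀ i, α i ≤ a) :
    ∃ F : (Fin M → ∀ i : Fin b, ZMod (p ^ α (Fin.castLE hbl i))) →
        {H : AddSubgroup (∀ i : Fin (l + 1), ZMod (p ^ α i)) //
          Nonempty (H ≃+ (Fin M → ZMod (p ^ a)))},
      Function.Injective F := by
  classical
  haveI : Module (ZMod (p ^ a)) (∀ i : Fin b, ZMod (p ^ α (Fin.castLE hbl i))) :=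
    AddCommGroup.zmodModule (by
      intro x
      funext i
      show (p ^ a) • x i = 0
      rw [nsmul_eq_mul,
        (CharP.cast_eq_zero_iff (ZMod (p ^ α (Fin.castLE hbl i))) (p ^ α (Fin.castLE hbl i))
          (p ^ a)).mpr (pow_dvd_pow p (hle _)), zero_mul])
  -- the top indices
  let tp : Fin M → Fin (l + 1) := fun j => ⟨b + j.val, by omega⟩
  have htp : ∀ j, α (tp j) = a := fun j => htop _ (Nat.le_add_right _ _)
  -- the projection onto the top coordinates
  let π : (∀ i : Fin (l + 1), ZMod (p ^ α i)) →+ (Fin M → ZMod (p ^ a)) := AddMonoidHom.mk'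
    (fun x j => ZMod.castHom (pow_dvd_pow p (htp j).ge) (ZMod (p ^ a)) (x (tp j)))
    (by
      intro x y
      funext j
      simp only [Pi.add_apply, map_add])
  -- the section of π
  let s : (Fin M → ZMod (p ^ a)) →+ (∀ i : Fin (l + 1), ZMod (p ^ α i)) := AddMonoidHom.mk'
    (fun v i => if h : b ≤ i.val then
        ZMod.castHom (pow_dvd_pow p (hle i)) (ZMod (p ^ α i)) (v ⟨i.val - b, by omega⟩)
      else 0)
    (by
      intro v w
      funext i
      simp only [Pi.add_apply, map_add]
      by_cases h : b ≤ i.val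
      · rw [dif_pos h, dif_pos h, dif_pos h]
      · rw [dif_neg h, dif_neg h, dif_neg h, add_zero])
  -- the inclusion of the bottom coordinates
  let ι : (∀ i : Fin b, ZMod (p ^ α (Fin.castLE hbl i))) →+
      (∀ i : Fin (l + 1), ZMod (p ^ α i)) := AddMonoidHom.mk'
    (fun y i => if h : i.val < b then y ⟨i.val, h⟩ else 0)
    (by
      intro y z
      funext i
      simp only [Pi.add_apply]
      by_cases h : i.val < b
      · rw [dif_pos h, dif_pos h, dif_pos h]
      · rw [dif_neg h, dif_neg h, dif_neg h, add_zero])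
  have hπs : ∀ v, π (s v) = v := by
    intro v
    funext j
    show ZMod.castHom (pow_dvd_pow p (htp j).ge) (ZMod (p ^ a)) (s v (tp j)) = v j
    have hble : b ≤ (tp j).val := Nat.le_add_right _ _
    have hidx : (⟨(tp j).val - b, by omega⟩ : Fin M) = j := Fin.ext (by simp [tp])
    have hs : s v (tp j)
        = ZMod.castHom (pow_dvd_pow p (hle (tp j))) (ZMod (p ^ α (tp j))) (v j) := by
      show dite _ _ _ = _
      rw [dif_pos hble, hidx]
    rw [hs, ← RingHom.comp_apply, ZMod.castHom_comp, ZMod.castHom_self, RingHom.id_apply]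
  have hπι : ∀ y, π (ι y) = 0 := by
    intro y
    funext j
    show ZMod.castHom (pow_dvd_pow p (htp j).ge) (ZMod (p ^ a)) (ι y (tp j)) = 0
    have h0 : ι y (tp j) = 0 := by
      show dite _ _ _ = 0
      rw [dif_neg (by simp [tp])]
    rw [h0, map_zero]
  have hι_inj : Function.Injective ι := by
    intro y z h
    funext i0
    have h2 := congrFun h (Fin.castLE hbl i0)
    have hlt : (Fin.castLE hbl i0).val < b := i0.isLt
    show y i0 = z i0
    have hy : ι y (Fin.castLE hbl i0) = y i0 := by
      show dite _ _ _ = _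
      rw [dif_pos hlt]
      rfl
    have hz : ι z (Fin.castLE hbl i0) = z i0 := by
      show dite _ _ _ = _
      rw [dif_pos hlt]
      rfl
    rw [← hy, ← hz]
    exact h2
  -- the linear parametrization
  let Λ : (Fin M → ∀ i : Fin b, ZMod (p ^ α (Fin.castLE hbl i))) →
      ((Fin M → ZMod (p ^ a)) →ₗ[ZMod (p ^ a)]
        (∀ i : Fin b, ZMod (p ^ α (Fin.castLE hbl i)))) := fun ψ =>
    ∑ j, (LinearMap.proj j).smulRight (ψ j)
  have hΛ_single : ∀ (ψ : Fin M → ∀ i : Fin b, ZMod (p ^ α (Fin.castLE hbl i))) (j : Fin M),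
      Λ ψ (Pi.single j 1) = ψ j := by
    intro ψ j
    show (∑ j', (LinearMap.proj (R := ZMod (p ^ a))
        (φ := fun _ : Fin M => ZMod (p ^ a)) j').smulRight (ψ j')) (Pi.single j 1) = ψ j
    rw [LinearMap.sum_apply]
    rw [Finset.sum_eq_single j]
    · simp
    · intro j' _ hne
      simp [Pi.single_eq_of_ne hne]
    · simp
  -- the injections
  let f : (Fin M → ∀ i : Fin b, ZMod (p ^ α (Fin.castLE hbl i))) →
      ((Fin M → ZMod (p ^ a)) →+ (∀ i : Fin (l + 1), ZMod (p ^ α i))) := fun ψ =>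
    s + ι.comp (Λ ψ).toAddMonoidHom
  have hπf : ∀ ψ v, π (f ψ v) = v := by
    intro ψ v
    show π (s v + ι ((Λ ψ).toAddMonoidHom v)) = v
    rw [map_add, hπs, hπι, add_zero]
  have hf_inj : ∀ ψ, Function.Injective (f ψ) := by
    intro ψ x y h
    have := congrArg π h
    rwa [hπf, hπf] at this
  refine ⟨fun ψ => ⟨(f ψ).range, ⟨(AddMonoidHom.ofInjective (hf_inj ψ)).symm⟩⟩, ?_⟩
  intro ψ ψ' h
  have hrange : (f ψ).range = (f ψ').range := congrArg Subtype.val h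
  have hfeq : ∀ v, f ψ v = f ψ' v := by
    intro v
    have hmem : f ψ v ∈ (f ψ').range := by
      rw [← hrange]
      exact ⟨v, rfl⟩
    obtain ⟨w, hw⟩ := hmem
    have hwv : w = v := by
      have := congrArg π hw
      rwa [hπf, hπf] at this
    rw [← hw, hwv]
  funext j
  have h1 : s (Pi.single j 1) + ι ((Λ ψ).toAddMonoidHom (Pi.single j 1))
      = s (Pi.single j 1) + ι ((Λ ψ').toAddMonoidHom (Pi.single j 1)) := hfeq (Pi.single j 1)
  have h3 := hι_inj (add_left_cancel h1)
  have e1 : (Λ ψ).toAddMonoidHom (Pi.single j 1) = ψ j := hΛ_single ψ j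
  have e2 : (Λ ψ').toAddMonoidHom (Pi.single j 1) = ψ' j := hΛ_single ψ' j
  rwa [e1, e2] at h3

/-- let `G` be a finite abelian `p`-group of type `(α_1, ..., α_{l+1})` with
`α_1 ≤ ... ≤ α_{l+1}`, and suppose `G` contains a subgroup isomorphic to
`Z_{p^{α_{l+1}}}^M`, `M ≥ 1`. Then the number of subgroups of `G` isomorphic to
`Z_{p^{α_{l+1}}}^M` is at least `p^{-M² α_{l+1}} · |G|^M`. -/
theorem stmt7 (p : ℕ) (hp : p.Prime) (l M : ℕ) (hM : 1 ≤ M)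
    (α : Fin (l + 1) → ℕ) (hmono : Monotone α)
    (hex : ∃ H : AddSubgroup (∀ i : Fin (l + 1), ZMod (p ^ α i)),
      Nonempty (H ≃+ (Fin M → ZMod (p ^ α (Fin.last l))))) :
    Nat.card (∀ i : Fin (l + 1), ZMod (p ^ α i)) ^ M ≤
      p ^ (M ^ 2 * α (Fin.last l)) *
        Nat.card {H : AddSubgroup (∀ i : Fin (l + 1), ZMod (p ^ α i)) //
          Nonempty (H ≃+ (Fin M → ZMod (p ^ α (Fin.last l))))} := by
  classical
  haveI hNZ : ∀ i : Fin (l + 1), NeZero (p ^ α i) := fun i => ⟨pow_ne_zero _ hp.pos.ne'⟩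
  haveI : Finite (∀ i : Fin (l + 1), ZMod (p ^ α i)) := by
    haveI : ∀ i : Fin (l + 1), Finite (ZMod (p ^ α i)) := fun i => inferInstance
    infer_instance
  haveI : Finite (AddSubgroup (∀ i : Fin (l + 1), ZMod (p ^ α i))) :=
    Finite.of_injective (fun H : AddSubgroup (∀ i : Fin (l + 1), ZMod (p ^ α i)) => (H : Set (∀ i : Fin (l + 1), ZMod (p ^ α i)))) SetLike.coe_injective
  obtain ⟨H0, ⟨e⟩⟩ := hex
  haveI : Nonempty {H : AddSubgroup (∀ i : Fin (l + 1), ZMod (p ^ α i)) //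
      Nonempty (H ≃+ (Fin M → ZMod (p ^ α (Fin.last l))))} := ⟨⟨H0, ⟨e⟩⟩⟩
  have hNpos : 0 < Nat.card {H : AddSubgroup (∀ i : Fin (l + 1), ZMod (p ^ α i)) //
      Nonempty (H ≃+ (Fin M → ZMod (p ^ α (Fin.last l))))} := Nat.card_pos
  have hle : ∀ i, α i ≤ α (Fin.last l) := fun i => hmono (Fin.le_last i)
  rcases Nat.eq_zero_or_pos (α (Fin.last l)) with ha0 | ha1
  · -- trivial case: the group is trivial
    haveI : ∀ i : Fin (l + 1), Subsingleton (ZMod (p ^ α i)) := fun i => by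
      have hz : α i = 0 := le_antisymm (ha0 ▸ hle i) (Nat.zero_le _)
      rw [hz, pow_zero]
      infer_instance
    have hG1 : Nat.card (∀ i : Fin (l + 1), ZMod (p ^ α i)) = 1 :=
      Nat.card_of_subsingleton 0
    rw [hG1, one_pow]
    exact Nat.mul_pos (pow_pos hp.pos _) hNpos
  -- main case
  -- Step 1 : count the image of multiplication by p ^ (α_last - 1)
  have hrange_sub : (Set.range fun x : H0 =>
        (p ^ (α (Fin.last l) - 1)) • (x : ∀ i : Fin (l + 1), ZMod (p ^ α i))) ⊆
      (Set.range fun x : ∀ i : Fin (l + 1), ZMod (p ^ α i) =>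
        (p ^ (α (Fin.last l) - 1)) • x) := by
    rintro _ ⟨x, rfl⟩
    exact ⟨x, rfl⟩
  have hcardT : Nat.card (Set.range fun x : ∀ i : Fin (l + 1), ZMod (p ^ α i) =>
        (p ^ (α (Fin.last l) - 1)) • x)
      = p ^ (Finset.univ.filter (fun i => α i = α (Fin.last l))).card := by
    have h1 : Nat.card (Set.range fun x : ∀ i : Fin (l + 1), ZMod (p ^ α i) =>
          (p ^ (α (Fin.last l) - 1)) • x)
        = ∏ i, Nat.card (Set.range fun y : ZMod (p ^ α i) =>
            (p ^ (α (Fin.last l) - 1)) • y) := by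
      have h2 := Nat.card_congr
        (piRangeEquiv fun (i : Fin (l + 1)) (y : ZMod (p ^ α i)) =>
          (p ^ (α (Fin.last l) - 1)) • y)
      rw [Nat.card_pi] at h2
      exact h2
    rw [h1, Finset.prod_congr rfl
        (fun i _ => card_range_nsmul_zmod_pow p hp _ _ ha1 (hle i)),
      Finset.prod_ite, Finset.prod_const, Finset.prod_const, one_pow, mul_one]
  have hVcard : Nat.card (Set.range fun v : Fin M → ZMod (p ^ α (Fin.last l)) =>
        (p ^ (α (Fin.last l) - 1)) • v) = p ^ M := by
    have h1 : Nat.card (Set.range fun v : Fin M → ZMod (p ^ α (Fin.last l)) =>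
          (p ^ (α (Fin.last l) - 1)) • v)
        = ∏ _j : Fin M, Nat.card (Set.range fun y : ZMod (p ^ α (Fin.last l)) =>
            (p ^ (α (Fin.last l) - 1)) • y) := by
      have h2 := Nat.card_congr
        (piRangeEquiv fun (_ : Fin M) (y : ZMod (p ^ α (Fin.last l))) =>
          (p ^ (α (Fin.last l) - 1)) • y)
      rw [Nat.card_pi] at h2
      exact h2
    rw [h1, card_range_nsmul_zmod_pow p hp _ _ ha1 le_rfl, if_pos rfl, Finset.prod_const,
      Finset.card_univ, Fintype.card_fin]
  have hSH : Nat.card (Set.range fun x : H0 =>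
        (p ^ (α (Fin.last l) - 1)) • (x : ∀ i : Fin (l + 1), ZMod (p ^ α i)))
      = Nat.card (Set.range fun v : Fin M → ZMod (p ^ α (Fin.last l)) =>
        (p ^ (α (Fin.last l) - 1)) • v) := by
    have key : (Set.range fun x : H0 =>
          (p ^ (α (Fin.last l) - 1)) • (x : ∀ i : Fin (l + 1), ZMod (p ^ α i)))
        = (fun v => ((e.symm v : H0) : ∀ i : Fin (l + 1), ZMod (p ^ α i))) ''
          (Set.range fun v : Fin M → ZMod (p ^ α (Fin.last l)) =>
            (p ^ (α (Fin.last l) - 1)) • v) := by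
      ext z
      constructor
      · rintro ⟨x, rfl⟩
        refine ⟨(p ^ (α (Fin.last l) - 1)) • e x, ⟨e x, rfl⟩, ?_⟩
        show ((e.symm ((p ^ (α (Fin.last l) - 1)) • e x) : H0) :
            ∀ i : Fin (l + 1), ZMod (p ^ α i))
          = (p ^ (α (Fin.last l) - 1)) • (x : ∀ i : Fin (l + 1), ZMod (p ^ α i))
        rw [map_nsmul, AddEquiv.symm_apply_apply]
        rfl
      · rintro ⟨w, ⟨v, rfl⟩, rfl⟩
        refine ⟨e.symm v, ?_⟩
        show (p ^ (α (Fin.last l) - 1)) • ((e.symm v : H0) : ∀ i : Fin (l + 1), ZMod (p ^ α i))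
          = ((e.symm ((p ^ (α (Fin.last l) - 1)) • v) : H0) : ∀ i : Fin (l + 1), ZMod (p ^ α i))
        rw [map_nsmul]
        rfl
    rw [key, Nat.card_image_of_injective
      (fun v w hvw => e.symm.injective (Subtype.coe_injective hvw)) _]
  have hMk : M ≤ (Finset.univ.filter (fun i => α i = α (Fin.last l))).card := by
    have hle2 : p ^ M ≤ p ^ (Finset.univ.filter (fun i => α i = α (Fin.last l))).card := by
      calc p ^ M
          = Nat.card (Set.range fun v : Fin M → ZMod (p ^ α (Fin.last l)) =>
              (p ^ (α (Fin.last l) - 1)) • v) := hVcard.symm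
        _ = Nat.card (Set.range fun x : H0 =>
              (p ^ (α (Fin.last l) - 1)) • (x : ∀ i : Fin (l + 1), ZMod (p ^ α i))) := hSH.symm
        _ ≤ Nat.card (Set.range fun x : ∀ i : Fin (l + 1), ZMod (p ^ α i) =>
              (p ^ (α (Fin.last l) - 1)) • x) := Nat.card_mono (Set.toFinite _) hrange_sub
        _ = _ := hcardT
    exact (Nat.pow_le_pow_iff_right hp.one_lt).mp hle2
  have hMl : M ≤ l + 1 := by
    have := (Finset.card_filter_le Finset.univ (fun i : Fin (l + 1) => α i = α (Fin.last l)))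
    simp only [Finset.card_univ, Fintype.card_fin] at this
    omega
  have htop : ∀ i : Fin (l + 1), l + 1 - M ≤ i.val → α i = α (Fin.last l) := by
    intro i hi
    by_contra hne
    have hlt : α i < α (Fin.last l) := lt_of_le_of_ne (hle i) hne
    have hsub2 : Finset.univ.filter (fun j => α j = α (Fin.last l)) ⊆ Finset.Ioi i := by
      intro j hj
      rw [Finset.mem_filter] at hj
      rw [Finset.mem_Ioi]
      by_contra hji
      push_neg at hji
      have : α (Fin.last l) ≤ α i := hj.2 ▸ hmono hji
      omega
    have hcle := Finset.card_le_card hsub2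
    rw [Fin.card_Ioi] at hcle
    have := i.isLt
    omega
  -- Step 2 : the injection
  have hbl : l + 1 - M ≤ l + 1 := by omega
  obtain ⟨F, hF⟩ := exists_injection p (α (Fin.last l)) l M (l + 1 - M) (by omega) hbl α htop hle
  have hcard_le : Nat.card (Fin M → ∀ i : Fin (l + 1 - M), ZMod (p ^ α (Fin.castLE hbl i)))
      ≤ Nat.card {H : AddSubgroup (∀ i : Fin (l + 1), ZMod (p ^ α i)) //
          Nonempty (H ≃+ (Fin M → ZMod (p ^ α (Fin.last l))))} :=
    Nat.card_le_card_of_injective F hF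
  -- Step 3 : cardinality bookkeeping
  have hKcard : Nat.card (∀ i : Fin (l + 1 - M), ZMod (p ^ α (Fin.castLE hbl i)))
      = p ^ (∑ i : Fin (l + 1 - M), α (Fin.castLE hbl i)) := by
    rw [Nat.card_pi, Finset.prod_congr rfl (fun i _ => Nat.card_zmod _),
      Finset.prod_pow_eq_pow_sum]
  have hGcard : Nat.card (∀ i : Fin (l + 1), ZMod (p ^ α i)) = p ^ (∑ i, α i) := by
    rw [Nat.card_pi, Finset.prod_congr rfl (fun i _ => Nat.card_zmod _),
      Finset.prod_pow_eq_pow_sum]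
  have hb' : (l + 1 - M) + M = l + 1 := by omega
  have hsum : ∑ i : Fin (l + 1), α i
      = (∑ i : Fin (l + 1 - M), α (Fin.castLE hbl i)) + M * α (Fin.last l) := by
    have h1 : ∑ i : Fin (l + 1 - M), α (Fin.cast hb' (Fin.castAdd M i))
        = ∑ i : Fin (l + 1 - M), α (Fin.castLE hbl i) :=
      Finset.sum_congr rfl fun i _ => congrArg α (Fin.ext rfl)
    have h2 : ∑ j : Fin M, α (Fin.cast hb' (Fin.natAdd (l + 1 - M) j)) = M * α (Fin.last l) := by
      rw [Finset.sum_congr rfl (fun j _ =>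
        htop (Fin.cast hb' (Fin.natAdd (l + 1 - M) j)) (Nat.le_add_right _ _))]
      simp [Finset.sum_const, Finset.card_univ, mul_comm]
    rw [← Fin.sum_congr' α hb', Fin.sum_univ_add, h1, h2]
  have hfun : Nat.card (Fin M → ∀ i : Fin (l + 1 - M), ZMod (p ^ α (Fin.castLE hbl i)))
      = Nat.card (∀ i : Fin (l + 1 - M), ZMod (p ^ α (Fin.castLE hbl i))) ^ M := by
    rw [Nat.card_pi, Finset.prod_const, Finset.card_univ, Fintype.card_fin]
  calc Nat.card (∀ i : Fin (l + 1), ZMod (p ^ α i)) ^ M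
      = (Nat.card (∀ i : Fin (l + 1 - M), ZMod (p ^ α (Fin.castLE hbl i)))
          * p ^ (M * α (Fin.last l))) ^ M := by
        rw [hGcard, hsum, pow_add, hKcard]
    _ = Nat.card (∀ i : Fin (l + 1 - M), ZMod (p ^ α (Fin.castLE hbl i))) ^ M
        * p ^ (M ^ 2 * α (Fin.last l)) := by
        rw [mul_pow, ← pow_mul, show M * α (Fin.last l) * M = M ^ 2 * α (Fin.last l) from by ring]
    _ ≤ Nat.card {H : AddSubgroup (∀ i : Fin (l + 1), ZMod (p ^ α i)) //
          Nonempty (H ≃+ (Fin M → ZMod (p ^ α (Fin.last l))))}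
        * p ^ (M ^ 2 * α (Fin.last l)) := by
        refine Nat.mul_le_mul_right _ ?_
        rw [← hfun]
        exact hcard_le
    _ = p ^ (M ^ 2 * α (Fin.last l)) *
        Nat.card {H : AddSubgroup (∀ i : Fin (l + 1), ZMod (p ^ α i)) //
          Nonempty (H ≃+ (Fin M → ZMod (p ^ α (Fin.last l))))} := mul_comm _ _
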